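/- Let ρ(u), σ(u) be finite families of positive semidefinite operators each with total trace 1. If there exists a family τ(u) of positive semidefinite operators with Σ_u tr(τ(u)) ≥ 1 − ε, τ(u) ≤ ρ(u), and τ(u) ≤ σ(u) for all u, then the total variation distance (1/2) Σ_u tr|ρ(u) − σ(u)| is at most ε. -/

import Mathlib

open scoped Matrix BigOperators Classical ComplexOrder

noncomputable section

/-- Real part of the trace of a complex matrix. -/
def rtr {d : ℕ} (M : Matrix (Fin d) (Fin d) ℂ) : ℝ := (Matrix.trace M).re

/-- Functional calculus applied to a matrix (junk value `0` if the matrix is not Hermitian). -/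
def mfun {d : ℕ} (f : ℝ → ℝ) (A : Matrix (Fin d) (Fin d) ℂ) : Matrix (Fin d) (Fin d) ℂ :=
  if h : A.IsHermitian then h.cfc f else 0

/-- Positive part `[A]₊` of a Hermitian matrix. -/
def posPartM {d : ℕ} (A : Matrix (Fin d) (Fin d) ℂ) : Matrix (Fin d) (Fin d) ℂ :=
  mfun (fun x => max x 0) A

/-- Projector onto the support of the positive part of a Hermitian matrix. -/
def posSuppProj {d : ℕ} (A : Matrix (Fin d) (Fin d) ℂ) : Matrix (Fin d) (Fin d) ℂ :=
  mfun (fun x => if 0 < x then 1 else 0) A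

/-- Operator absolute value of a Hermitian matrix. -/
def absM {d : ℕ} (A : Matrix (Fin d) (Fin d) ℂ) : Matrix (Fin d) (Fin d) ℂ :=
  mfun (fun x => |x|) A

/-- Moore–Penrose (relative) power of a Hermitian matrix: `x ↦ x ^ p` on the support,
`0` on the kernel. -/
def mpow {d : ℕ} (A : Matrix (Fin d) (Fin d) ℂ) (p : ℝ) : Matrix (Fin d) (Fin d) ℂ :=
  mfun (fun x => if x = 0 then 0 else x ^ p) A

/-- Support containment: the kernel of `σ` is contained in the kernel of `ρ`,
i.e. `supp ρ ⊆ supp σ` for positive semidefinite matrices. -/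
def suppSubset {d : ℕ} (ρ σ : Matrix (Fin d) (Fin d) ℂ) : Prop :=
  ∀ v : Fin d → ℂ, σ.mulVec v = 0 → ρ.mulVec v = 0

/-- Sandwiched Rényi power `R_α(ρ|σ) = tr((σ^{-β/(2α)} ρ σ^{-β/(2α)})^α)`, `β = α - 1`. -/
def sandR {d : ℕ} (α : ℝ) (ρ σ : Matrix (Fin d) (Fin d) ℂ) : ℝ :=
  rtr (mpow (mpow σ (-(α - 1) / (2 * α)) * ρ * mpow σ (-(α - 1) / (2 * α))) α)

/-- Petz Rényi power `tr(ρ^α σ^{-β})`, `β = α - 1`. -/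
def petzR {d : ℕ} (α : ℝ) (ρ σ : Matrix (Fin d) (Fin d) ℂ) : ℝ :=
  rtr (mpow ρ α * mpow σ (-(α - 1)))

lemma rtr_sub {d : ℕ} (A B : Matrix (Fin d) (Fin d) ℂ) : rtr (A - B) = rtr A - rtr B := by
  simp [rtr, Matrix.trace_sub]

lemma diag_re_nonneg {d : ℕ} {A : Matrix (Fin d) (Fin d) ℂ} (hA : A.PosSemidef) (i : Fin d) :
    0 ≤ (A i i).re := by
  have := hA.re_dotProduct_nonneg (Pi.single i 1)
  simpa [dotProduct, Matrix.mulVec, Pi.single_apply, Finset.mul_sum] using this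

lemma key {d : ℕ} {A B : Matrix (Fin d) (Fin d) ℂ} (hA : A.PosSemidef) (hB : B.PosSemidef) :
    rtr (absM (A - B)) ≤ rtr A + rtr B := by
  set M := A - B with hMdef
  have hM : M.IsHermitian := hA.1.sub hB.1
  set U : Matrix (Fin d) (Fin d) ℂ := (Matrix.IsHermitian.eigenvectorUnitary hM : Matrix (Fin d) (Fin d) ℂ) with hUdef
  have hU1 : U * star U = 1 := (Matrix.mem_unitaryGroup_iff).mp (Matrix.IsHermitian.eigenvectorUnitary hM).2
  have hU2 : star U * U = 1 := (Matrix.mem_unitaryGroup_iff').mp (Matrix.IsHermitian.eigenvectorUnitary hM).2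
  -- trace is invariant under conjugation by U
  have htr : ∀ X : Matrix (Fin d) (Fin d) ℂ, rtr (star U * X * U) = rtr X := by
    intro X
    unfold rtr
    rw [Matrix.trace_mul_cycle, hU1, one_mul]
  -- the conjugated M is diagonal
  have hdiagM : star U * M * U = Matrix.diagonal (RCLike.ofReal ∘ hM.eigenvalues) := by
    conv_lhs => rw [hM.spectral_theorem]
    rw [Unitary.conjStarAlgAut_apply, ← hUdef, mul_assoc, mul_assoc, hU2, mul_one, ← mul_assoc, hU2, one_mul]
  -- absM M in diagonalized form
  have habs : absM M = U * Matrix.diagonal (RCLike.ofReal ∘ (fun x => |x|) ∘ hM.eigenvalues) * star U := by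
    rw [absM, mfun, dif_pos hM]
    rfl
  have htrabs : rtr (absM M) = ∑ i, |hM.eigenvalues i| := by
    rw [habs]
    unfold rtr
    rw [Matrix.trace_mul_cycle, hU2, one_mul, Matrix.trace_diagonal]
    simp
  -- diagonal entries of conjugated A and B
  set a : Fin d → ℝ := fun i => ((star U * A * U) i i).re with hadef
  set b : Fin d → ℝ := fun i => ((star U * B * U) i i).re with hbdef
  have hAc : (star U * A * U).PosSemidef := by
    simpa [Matrix.star_eq_conjTranspose] using hA.conjTranspose_mul_mul_same U
  have hBc : (star U * B * U).PosSemidef := by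
    simpa [Matrix.star_eq_conjTranspose] using hB.conjTranspose_mul_mul_same U
  have ha0 : ∀ i, 0 ≤ a i := fun i => diag_re_nonneg hAc i
  have hb0 : ∀ i, 0 ≤ b i := fun i => diag_re_nonneg hBc i
  have hev : ∀ i, hM.eigenvalues i = a i - b i := by
    intro i
    have : (star U * M * U) i i = (star U * A * U) i i - (star U * B * U) i i := by
      rw [hMdef]
      simp [Matrix.mul_sub, Matrix.sub_mul, Matrix.sub_apply]
    rw [hdiagM] at this
    have := congrArg Complex.re this
    simpa using this
  have hsum : ∑ i, |hM.eigenvalues i| ≤ (∑ i, a i) + (∑ i, b i) := by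
    rw [← Finset.sum_add_distrib]
    apply Finset.sum_le_sum
    intro i _
    rw [hev i]
    exact (abs_sub (a i) (b i)).trans (by rw [abs_of_nonneg (ha0 i), abs_of_nonneg (hb0 i)])
  have hta : ∑ i, a i = rtr A := by
    rw [← htr A]
    unfold rtr
    rw [Matrix.trace]
    simp [Matrix.diag, Complex.re_sum]
    rfl
  have htb : ∑ i, b i = rtr B := by
    rw [← htr B]
    unfold rtr
    rw [Matrix.trace]
    simp [Matrix.diag, Complex.re_sum]
    rfl
  rw [htrabs, ← hta, ← htb]
  exact hsum

/-- If a common positive lower bound `τ(u) ≤ ρ(u), σ(u)` has total trace at least `1 - ε`,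
then the total variation distance between the normalized families `ρ` and `σ` is at most
`ε`. -/
theorem stmt3 {d : ℕ} {U : Type*} [Fintype U]
    (ρ σ τ : U → Matrix (Fin d) (Fin d) ℂ)
    (hρ : ∀ u, (ρ u).PosSemidef) (hσ : ∀ u, (σ u).PosSemidef)
    (hτ : ∀ u, (τ u).PosSemidef)
    (hρ1 : ∑ u, rtr (ρ u) = 1) (hσ1 : ∑ u, rtr (σ u) = 1)
    (ε : ℝ) (hε : 0 ≤ ε)
    (hτtr : 1 - ε ≤ ∑ u, rtr (τ u))
    (hτρ : ∀ u, (ρ u - τ u).PosSemidef)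
    (hτσ : ∀ u, (σ u - τ u).PosSemidef) :
    (1 / 2) * ∑ u, rtr (absM (ρ u - σ u)) ≤ ε := by
  have step : ∀ u, rtr (absM (ρ u - σ u)) ≤ rtr (ρ u - τ u) + rtr (σ u - τ u) := by
    intro u
    have h := key (hτρ u) (hτσ u)
    rwa [sub_sub_sub_cancel_right] at h
  have hsum : ∑ u, rtr (absM (ρ u - σ u)) ≤ ∑ u, (rtr (ρ u - τ u) + rtr (σ u - τ u)) :=
    Finset.sum_le_sum fun u _ => step u
  have : ∑ u, (rtr (ρ u - τ u) + rtr (σ u - τ u))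
      = (1 - ∑ u, rtr (τ u)) + (1 - ∑ u, rtr (τ u)) := by
    simp only [rtr_sub]
    rw [Finset.sum_add_distrib, Finset.sum_sub_distrib, Finset.sum_sub_distrib, hρ1, hσ1]
  rw [this] at hsum
  linarith
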